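/- Let (v_n)_{n≥1} be a sequence of finite words over a finite alphabet with v₁ nonempty, and let x be the sesquipower induced by (v_n): the infinite word that is the limit of w₁ = v₁, w_{n+1} = w_n v_n w_n. Suppose x is aperiodic and avoids k-anti-powers for some integer k ≥ 2. Then there exists a nonempty finite word u with |u| ≤ k - 1 such that for every ℓ > 0 there is some n > 0 for which u^ℓ is a factor of v_n. -/

import Mathlib

/-- `u ^ ℓ` : the finite word `u` concatenated with itself `ℓ` times. -/
def powWord {A : Type*} (u : List A) (ℓ : ℕ) : List A :=
  (List.replicate ℓ u).flatten

/-- The `i`-th block of length `m` of a finite word `v`. -/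
def listBlock {A : Type*} (v : List A) (m i : ℕ) : List A :=
  (v.drop (i * m)).take m

/-- `v` is a `k`-anti-power: `v` consists of `k` pairwise distinct blocks of equal
positive length. -/
def IsKAntipower {A : Type*} (k : ℕ) (v : List A) : Prop :=
  ∃ m : ℕ, 1 ≤ m ∧ v.length = k * m ∧
    ∀ i < k, ∀ j < k, i ≠ j → listBlock v m i ≠ listBlock v m j

/-- The finite word `u` occurs in the infinite word `x` at position `i`. -/
def OccursAt {A : Type*} (x : ℕ → A) (u : List A) (i : ℕ) : Prop :=
  u = (List.range u.length).map fun j => x (i + j)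

/-- The finite word `u` is a factor of the infinite word `x`. -/
def IsFactor {A : Type*} (x : ℕ → A) (u : List A) : Prop :=
  ∃ i, OccursAt x u i

/-- `x` is eventually periodic: some suffix of `x` is periodic with period `p > 0`. -/
def EventuallyPeriodic {A : Type*} (x : ℕ → A) : Prop :=
  ∃ j p : ℕ, 0 < p ∧ ∀ n, j ≤ n → x (n + p) = x n

/-- The sequence `w₁ = v₁`, `w_{n+1} = w_n v_n w_n` (here 0-indexed: `v n` is `v_{n+1}`
and `sesq v n` is `w_{n+1}`). -/
def sesq {A : Type*} (v : ℕ → List A) : ℕ → List A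
  | 0 => v 0
  | n + 1 => sesq v n ++ v n ++ sesq v n

namespace S15

variable {A : Type*} (x : ℕ → A)

/-- contiguous factor of `x` starting at `s`, of length `L`, as a list -/
def Fac (s L : ℕ) : List A := (List.range L).map fun j => x (s + j)

@[simp] lemma Fac_length (s L : ℕ) : (Fac x s L).length = L := by simp [Fac]

lemma Fac_getElem (s L r : ℕ) (h : r < L) :
    (Fac x s L)[r]'(by simpa using h) = x (s + r) := by simp [Fac]

/-- weak period `p` on the segment `[s, s+L)` of `x` -/
def Per (s L p : ℕ) : Prop := ∀ r, r + p < L → x (s + r + p) = x (s + r)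

lemma Per_mono {s L L' p : ℕ} (h : Per x s L p) (hL : L' ≤ L) : Per x s L' p :=
  fun r hr => h r (lt_of_lt_of_le hr hL)

lemma Per_restrict {s L p α L' : ℕ} (h : Per x s L p) (h1 : s ≤ α) (h2 : α + L' ≤ s + L) :
    Per x α L' p := by
  intro r hr
  have e1 : α + r + p = s + ((α - s) + r) + p := by omega
  have e2 : α + r = s + ((α - s) + r) := by omega
  rw [e1, e2]
  exact h ((α - s) + r) (by omega)

lemma per_mod {s L p : ℕ} (hp : 0 < p) (h : Per x s L p) :
    ∀ r, r < L → x (s + r) = x (s + r % p) := by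
  intro r
  induction r using Nat.strong_induction_on with
  | _ r IH =>
    intro hr
    by_cases hlt : r < p
    · rw [Nat.mod_eq_of_lt hlt]
    · push_neg at hlt
      have h1 : x (s + (r - p) + p) = x (s + (r - p)) := h (r - p) (by omega)
      have e : s + (r - p) + p = s + r := by omega
      rw [e] at h1
      rw [h1, IH (r - p) (by omega) (by omega), Nat.mod_eq_sub_mod hlt]

lemma occursAt_Fac (s L : ℕ) : OccursAt x (Fac x s L) s := by
  simp [OccursAt, Fac]

lemma isFactor_Fac (s L : ℕ) : IsFactor x (Fac x s L) := ⟨s, occursAt_Fac x s L⟩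

lemma Fac_eq_iff (s₁ s₂ m : ℕ) :
    Fac x s₁ m = Fac x s₂ m ↔ ∀ r < m, x (s₁ + r) = x (s₂ + r) := by
  constructor
  · intro h r hr
    have := congrArg (fun l => l[r]?) h
    simpa [Fac, hr] using this
  · intro h
    apply List.ext_getElem (by simp)
    intro r h1 h2
    simp only [Fac, List.getElem_map, List.getElem_range]
    exact h r (by simpa using h1)

lemma Fac_drop (s L δ : ℕ) : (Fac x s L).drop δ = Fac x (s + δ) (L - δ) := by
  apply List.ext_getElem (by simp)
  intro r h1 h2
  simp only [List.getElem_drop, Fac, List.getElem_map, List.getElem_range]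
  congr 1
  omega

lemma Fac_take (s L t : ℕ) (h : t ≤ L) : (Fac x s L).take t = Fac x s t := by
  apply List.ext_getElem (by simp [h])
  intro r h1 h2
  simp only [List.getElem_take, Fac, List.getElem_map, List.getElem_range]

lemma Fac_infix {s L s₀ L₀ : ℕ} (h1 : s₀ ≤ s) (h2 : s + L ≤ s₀ + L₀) :
    Fac x s L <:+: Fac x s₀ L₀ := by
  have e : Fac x s L = ((Fac x s₀ L₀).drop (s - s₀)).take L := by
    rw [Fac_drop, Fac_take _ _ _ _ (by omega)]
    congr 1
    omega
  rw [e]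
  exact (List.take_prefix _ _).isInfix.trans (List.drop_suffix _ _).isInfix

lemma Fac_append (s L1 L2 : ℕ) :
    Fac x s (L1 + L2) = Fac x s L1 ++ Fac x (s + L1) L2 := by
  apply List.ext_getElem (by simp)
  intro r h1 h2
  by_cases hr : r < L1
  · rw [List.getElem_append_left (by simpa using hr)]
    simp only [Fac, List.getElem_map, List.getElem_range]
  · rw [List.getElem_append_right (by simpa using hr)]
    simp only [Fac, List.getElem_map, List.getElem_range, List.length_map, List.length_range]
    congr 1
    omega

lemma pw_succ {u : List A} (ℓ : ℕ) : powWord u (ℓ+1) = u ++ powWord u ℓ := by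
  simp [powWord, List.replicate_succ]

lemma pw_prefix {u : List A} {a b : ℕ} (h : a ≤ b) : powWord u a <+: powWord u b := by
  have : b = a + (b - a) := by omega
  rw [this]
  show powWord u a <+: powWord u (a + (b-a))
  unfold powWord
  rw [List.replicate_add, List.flatten_append]
  exact ⟨_, rfl⟩

lemma pow_eq {s L p : ℕ} (hPer : Per x s L p) :
    ∀ ℓ, (ℓ+1) * p ≤ L → powWord (Fac x s p) ℓ = Fac x s (ℓ * p) := by
  intro ℓ
  induction ℓ with
  | zero => intro _; simp [powWord, Fac]
  | succ n IH =>
    intro hb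
    rw [pw_succ, IH (by nlinarith)]
    have e : (n+1) * p = p + n * p := by ring
    rw [e, Fac_append]
    congr 1
    rw [Fac_eq_iff]
    intro r hr
    have h3 := hPer r (by nlinarith)
    have e2 : s + r + p = s + p + r := by omega
    rw [e2] at h3
    exact h3.symm

lemma listBlock_Fac (s L m i : ℕ) (h : i * m + m ≤ L) :
    listBlock (Fac x s L) m i = Fac x (s + i * m) m := by
  unfold listBlock
  rw [Fac_drop, Fac_take _ _ _ _ (by omega)]

/-- any window of `k` blocks of length `m` in `x` has two equal blocks -/
lemma exists_eq_blocks {k : ℕ} (hk : 2 ≤ k)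
    (havoid : ∀ w : List A, IsFactor x w → ¬ IsKAntipower k w)
    (s m : ℕ) (hm : 1 ≤ m) :
    ∃ i j, i < j ∧ j < k ∧ ∀ r < m, x (s + i * m + r) = x (s + j * m + r) := by
  by_contra hno
  push_neg at hno
  apply havoid (Fac x s (k * m)) (isFactor_Fac x s (k * m))
  refine ⟨m, hm, by simp, ?_⟩
  intro i hi j hj hij
  have key : ∀ i j, i < j → j < k → listBlock (Fac x s (k*m)) m i ≠ listBlock (Fac x s (k*m)) m j := by
    intro i j h1 h2
    rw [listBlock_Fac _ _ _ _ _ (by nlinarith), listBlock_Fac _ _ _ _ _ (by nlinarith)]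
    intro heq
    obtain ⟨r, hr, hne⟩ := hno i j h1 h2
    exact hne ((Fac_eq_iff x _ _ m).1 heq r hr)
  rcases Nat.lt_or_ge i j with h | h
  · exact key i j h hj
  · have : j < i := by omega
    exact fun heq => key j i this hi heq.symm

/-- If a segment of `x` of length `≥ k(p+1)` has minimal period `p`, then `p ≤ k-1`
(otherwise its first `k` blocks of length `p+1` would form a `k`-anti-power). -/
lemma min_period_le {k : ℕ} (hk : 2 ≤ k)
    (havoid : ∀ w : List A, IsFactor x w → ¬ IsKAntipower k w)
    {s L p : ℕ} (hp : 0 < p) (hPer : Per x s L p)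
    (hmin : ∀ q, 0 < q → Per x s L q → p ≤ q) (hL : k * (p+1) ≤ L) :
    p ≤ k - 1 := by
  by_contra hgt
  have hkp : k ≤ p := by omega
  obtain ⟨i', j', hij, hjk, heq⟩ := exists_eq_blocks x hk havoid s (p+1) (by omega)
  set s₀ := j' - i' with hs₀
  have hs₀pos : 0 < s₀ := by omega
  have hs₀lt : s₀ < p := by omega
  have hmod := per_mod x hp hPer
  -- products as linear facts
  have hij' : j' = i' + s₀ := by omega
  have hj'm : j' * (p+1) = i' * (p+1) + s₀ * (p+1) := by rw [hij', Nat.add_mul]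
  have hs₀m : s₀ * (p+1) = s₀ * p + s₀ := by ring
  have hi'b : i' * (p+1) ≤ (k-2) * (p+1) := Nat.mul_le_mul_right _ (by omega)
  have hj'b : j' * (p+1) ≤ (k-1) * (p+1) := Nat.mul_le_mul_right _ (by omega)
  have hk2 : (k-2) * (p+1) + (p+1) ≤ (k-1) * (p+1) := by
    have : (k-2) * (p+1) + 1 * (p+1) ≤ (k-1) * (p+1) :=
      by rw [← Nat.add_mul]; exact Nat.mul_le_mul_right _ (by omega)
    omega
  have hk1 : (k-1) * (p+1) + (p+1) ≤ k * (p+1) := by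
    have : (k-1) * (p+1) + 1 * (p+1) ≤ k * (p+1) :=
      by rw [← Nat.add_mul]; exact Nat.mul_le_mul_right _ (by omega)
    omega
  set N := i' * (p+1) with hN
  have hNmod := Nat.div_add_mod N p
  have hNlt : N % p < p := Nat.mod_lt _ hp
  have inv : ∀ c, c < p → x (s + c) = x (s + (c + s₀) % p) := by
    intro c hc
    have hmain : ∃ rr, rr < p ∧ (N + rr) % p = c := by
      by_cases hce : N % p ≤ c
      · refine ⟨c - N % p, by omega, ?_⟩
        have e1 : N + (c - N % p) = p * (N / p) + c := by omega
        rw [e1, Nat.mul_add_mod, Nat.mod_eq_of_lt hc]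
      · refine ⟨c + p - N % p, by omega, ?_⟩
        have hmul : p * (N / p + 1) = p * (N / p) + p := by ring
        have e1 : N + (c + p - N % p) = p * (N / p + 1) + c := by omega
        rw [e1, Nat.mul_add_mod, Nat.mod_eq_of_lt hc]
    obtain ⟨rr, hrrp, hkey⟩ := hmain
    have h1 : N + rr < L := by omega
    have h2 : j' * (p+1) + rr < L := by omega
    have e1 := heq rr (by omega)
    have e2 : s + i' * (p+1) + rr = s + (N + rr) := by omega
    have e3 : s + j' * (p+1) + rr = s + (N + rr + s₀ * (p+1)) := by omega
    rw [e2, e3] at e1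
    have e4 := hmod (N + rr) h1
    have e5 := hmod (N + rr + s₀ * (p+1)) (by omega)
    rw [hkey] at e4
    have e6 : (N + rr + s₀ * (p+1)) % p = (c + s₀) % p := by
      have : N + rr + s₀ * (p+1) = (N + rr + s₀) + s₀ * p := by omega
      rw [this, Nat.add_mul_mod_self_right, Nat.add_mod, hkey,
        Nat.mod_eq_of_lt hs₀lt]
    rw [e6] at e5
    rw [← e4, ← e5]
    exact e1
  have hPers₀ : Per x s L s₀ := by
    intro r hr
    have h1 := hmod (r + s₀) (by omega)
    have h2 := hmod r (by omega)
    have h3 := inv (r % p) (Nat.mod_lt _ hp)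
    have e1 : (r + s₀) % p = (r % p + s₀) % p := by
      conv_lhs => rw [Nat.add_mod, Nat.mod_eq_of_lt hs₀lt]
    have e2 : s + r + s₀ = s + (r + s₀) := by omega
    rw [e2, h1, e1, ← h3, ← h2]
  have := hmin s₀ hs₀pos hPers₀
  omega

/-- **Core combinatorial lemma**: an infinite word avoiding `k`-anti-powers contains,
for every `T`, a segment of length `T` with (weak) period between 1 and `k-1`. -/
lemma core {k : ℕ} (hk : 2 ≤ k)
    (havoid : ∀ w : List A, IsFactor x w → ¬ IsKAntipower k w) (T : ℕ) :
    ∃ s p, 0 < p ∧ p ≤ k - 1 ∧ Per x s T p := by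
  classical
  set K2 := k * k with hK2
  set p₀ := (k-1) * K2 with hp₀
  set M := k * K2 + k * (p₀ + 1) + T + 1 with hM
  have hpair : ∀ m, 1 ≤ m → ∃ ij : ℕ × ℕ, ij.1 < ij.2 ∧ ij.2 < k ∧
      ∀ r < m, x (ij.1 * m + r) = x (ij.2 * m + r) := by
    intro m hm
    obtain ⟨i, j, h1, h2, h3⟩ := exists_eq_blocks x hk havoid 0 m hm
    exact ⟨(i, j), h1, h2, by simpa using h3⟩
  let f : ℕ → ℕ × ℕ := fun m => if h : 1 ≤ m then (hpair m h).choose else (0, 0)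
  have hf : ∀ m, 1 ≤ m → (f m).1 < (f m).2 ∧ (f m).2 < k ∧
      ∀ r < m, x ((f m).1 * m + r) = x ((f m).2 * m + r) := by
    intro m hm
    simp only [f, dif_pos hm]
    exact (hpair m hm).choose_spec
  -- the post-pigeonhole argument
  have main : ∀ m₁ m₂, M ≤ m₁ → m₁ < m₂ → m₂ ≤ M + K2 → f m₁ = f m₂ →
      ∃ s p, 0 < p ∧ p ≤ k - 1 ∧ Per x s T p := by
    intro m₁ m₂ hMm₁ hlt hm₂M hfe
    have hm₁1 : 1 ≤ m₁ := by omega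
    have hm₂1 : 1 ≤ m₂ := by omega
    obtain ⟨hij₁, hjk₁, E₁⟩ := hf m₁ hm₁1
    obtain ⟨hij₂, hjk₂, E₂⟩ := hf m₂ hm₂1
    rw [← hfe] at E₂
    set i := (f m₁).1 with hi
    set j := (f m₁).2 with hj
    set d := j - i with hd
    set ε := m₂ - m₁ with hε
    have hd1 : 1 ≤ d := by omega
    have hdk : d ≤ k - 1 := by omega
    have hε1 : 1 ≤ ε := by omega
    have hεK : ε ≤ K2 := by omega
    have hiε : i * ε ≤ p₀ := by
      rw [hp₀]; exact Nat.mul_le_mul (by omega) hεK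
    set A := i * m₂ + d * m₁ with hA
    set L₁ := m₁ - i * ε with hL₁
    set q := d * ε with hq
    have hqp₀ : q ≤ p₀ := by rw [hq, hp₀]; exact Nat.mul_le_mul hdk hεK
    have hq1 : 1 ≤ q := by rw [hq]; exact Nat.mul_le_mul hd1 hε1
    -- linear relations between products
    have hm₂e : m₂ = m₁ + ε := by omega
    have r1 : i * m₂ = i * m₁ + i * ε := by rw [hm₂e, Nat.mul_add]
    have r2 : j * m₁ = i * m₁ + d * m₁ := by
      have : j = i + d := by omega
      rw [this, Nat.add_mul]
    have r3 : j * m₂ = i * m₂ + d * m₂ := by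
      have : j = i + d := by omega
      rw [this, Nat.add_mul]
    have r4 : d * m₂ = d * m₁ + d * ε := by rw [hm₂e, Nat.mul_add]
    have hc1 : (k-1) * K2 ≤ k * K2 := Nat.mul_le_mul_right _ (by omega)
    have hL₁ge : k * (p₀ + 1) + T + 1 ≤ L₁ := by omega
    have hL₁pos : p₀ < m₁ := by omega
    set L := L₁ + q with hL
    have hPer : Per x A L q := by
      intro rr hrr
      have hrrL : rr < L₁ := by omega
      have e₁ := E₁ (i * ε + rr) (by omega)
      have e₂ := E₂ rr (by omega)
      have p1 : i * m₁ + (i * ε + rr) = i * m₂ + rr := by omega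
      have p2 : j * m₁ + (i * ε + rr) = A + rr := by omega
      have p3 : j * m₂ + rr = A + rr + q := by omega
      rw [p1, p2] at e₁
      rw [p3] at e₂
      rw [← e₁, ← e₂]
    have hkp₀L : k * (p₀ + 1) + T ≤ L := by omega
    have hex : ∃ pp, 0 < pp ∧ Per x A L pp := ⟨q, hq1, hPer⟩
    set p := Nat.find hex with hpdef
    obtain ⟨hppos, hpPer⟩ := Nat.find_spec hex
    have hmin : ∀ q', 0 < q' → Per x A L q' → p ≤ q' := by
      intro q' h1 h2
      exact Nat.find_min' hex ⟨h1, h2⟩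
    have hpq : p ≤ q := hmin q hq1 hPer
    have hkL : k * (p + 1) ≤ L := by
      have h1 : k * (p + 1) ≤ k * (p₀ + 1) := Nat.mul_le_mul_left _ (by omega)
      omega
    have hple : p ≤ k - 1 := min_period_le x hk havoid hppos hpPer hmin hkL
    exact ⟨A, p, hppos, hple, Per_mono x hpPer (by omega)⟩
  -- pigeonhole
  have hcard : ((Finset.range k ×ˢ Finset.range k).filter fun pq => pq.1 < pq.2).card
      < (Finset.Icc M (M + K2)).card := by
    have h1 : ((Finset.range k ×ˢ Finset.range k).filter fun pq => pq.1 < pq.2).card ≤ K2 := by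
      calc ((Finset.range k ×ˢ Finset.range k).filter fun pq => pq.1 < pq.2).card
          ≤ (Finset.range k ×ˢ Finset.range k).card := Finset.card_filter_le _ _
        _ = K2 := by simp [hK2]
    rw [Nat.card_Icc]
    omega
  have hmaps : ∀ m ∈ Finset.Icc M (M + K2),
      f m ∈ (Finset.range k ×ˢ Finset.range k).filter fun pq => pq.1 < pq.2 := by
    intro m hm
    rw [Finset.mem_Icc] at hm
    obtain ⟨h1, h2, _⟩ := hf m (by omega)
    simp only [Finset.mem_filter, Finset.mem_product, Finset.mem_range]
    exact ⟨⟨by omega, h2⟩, h1⟩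
  obtain ⟨m₁, hm₁, m₂, hm₂, hne, hfe⟩ :=
    Finset.exists_ne_map_eq_of_card_lt_of_maps_to hcard hmaps
  rw [Finset.mem_Icc] at hm₁ hm₂
  rcases Nat.lt_or_ge m₁ m₂ with h | h
  · exact main m₁ m₂ (by omega) h (by omega) hfe
  · exact main m₂ m₁ (by omega) (by omega) (by omega) hfe.symm

section Sesq
variable (v : ℕ → List A)

lemma sesq_succ (n : ℕ) : sesq v n ++ v n ++ sesq v n = sesq v (n+1) := rfl

lemma sesq_eq_Fac (hx : ∀ n, OccursAt x (sesq v n) 0) (n : ℕ) :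
    sesq v n = Fac x 0 ((sesq v n).length) := hx n

lemma alen_succ (n : ℕ) :
    (sesq v (n+1)).length = (sesq v n).length + ((v n).length + (sesq v n).length) := by
  rw [← sesq_succ]
  simp
  try omega

lemma alen_lb (hv : v 0 ≠ []) (n : ℕ) : n + 1 ≤ (sesq v n).length := by
  induction n with
  | zero =>
    have := List.length_pos_iff.mpr hv
    simpa [sesq, Nat.pos_iff_ne_zero, Nat.one_le_iff_ne_zero] using this
  | succ n IH =>
    rw [alen_succ]
    omega

lemma alen_mono (hv : v 0 ≠ []) {m n : ℕ} (h : m ≤ n) :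
    (sesq v m).length ≤ (sesq v n).length := by
  induction n with
  | zero => simpa [Nat.le_zero.mp h]
  | succ n IH =>
    rcases Nat.lt_or_ge m (n+1) with h' | h'
    · have := IH (by omega)
      rw [alen_succ]
      omega
    · have : m = n + 1 := by omega
      rw [this]

lemma decomp (hx : ∀ n, OccursAt x (sesq v n) 0) (n : ℕ) :
    Fac x 0 ((sesq v (n+1)).length)
      = Fac x 0 ((sesq v n).length) ++ v n ++ Fac x 0 ((sesq v n).length) := by
  rw [← sesq_eq_Fac x v hx, ← sesq_eq_Fac x v hx, sesq_succ]

lemma xv (hx : ∀ n, OccursAt x (sesq v n) 0) (n : ℕ) :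
    v n = Fac x ((sesq v n).length) ((v n).length) := by
  have h1 : ((Fac x 0 ((sesq v (n+1)).length)).drop ((sesq v n).length)).take ((v n).length)
      = v n := by
    rw [decomp x v hx, List.append_assoc]
    rw [List.drop_left' (by simp), List.take_left' rfl]
  rw [← h1, Fac_drop, Fac_take]
  · simp
  · rw [alen_succ]; omega

lemma xq (hx : ∀ n, OccursAt x (sesq v n) 0) (n t : ℕ) (ht : t < (sesq v n).length) :
    x ((sesq v n).length + (v n).length + t) = x t := by
  have h1 : (Fac x 0 ((sesq v (n+1)).length)).drop ((sesq v n).length + (v n).length)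
      = Fac x 0 ((sesq v n).length) := by
    rw [decomp x v hx]
    rw [List.drop_left' (by simp)]
  rw [Fac_drop] at h1
  have h2 : (sesq v (n+1)).length - ((sesq v n).length + (v n).length)
      = (sesq v n).length := by rw [alen_succ]; omega
  rw [h2] at h1
  have := (Fac_eq_iff x _ _ _).1 h1 t ht
  simpa using this

end Sesq
end S15



open S15

/-- Let `(v_n)` be a sequence of finite words over a finite alphabet
with `v₁` nonempty, and let `x` be the induced sesquipower (the infinite word having every
`w_n` as a prefix, where `w₁ = v₁` and `w_{n+1} = w_n v_n w_n`).  If `x` is aperiodic and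
avoids `k`-anti-powers for some `k ≥ 2`, then there is a nonempty word `u` with
`|u| ≤ k - 1` such that for every `ℓ > 0`, `u^ℓ` is a factor of some `v_n`. -/
theorem statement15 {A : Type*} [Finite A] (v : ℕ → List A) (hv : v 0 ≠ [])
    (x : ℕ → A) (hx : ∀ n, OccursAt x (sesq v n) 0)
    (k : ℕ) (hk : 2 ≤ k)
    (haper : ¬ EventuallyPeriodic x)
    (havoid : ∀ w : List A, IsFactor x w → ¬ IsKAntipower k w) :
    ∃ u : List A, u ≠ [] ∧ u.length ≤ k - 1 ∧
      ∀ ℓ : ℕ, 0 < ℓ → ∃ n : ℕ, powWord u ℓ <:+: v n := by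
  classical
  by_contra hcon
  push_neg at hcon
  -- hcon : ∀ u, u ≠ [] → u.length ≤ k - 1 → ∃ ℓ, 0 < ℓ ∧ ∀ n, ¬ powWord u ℓ <:+: v n
  -- uniform exponent bound over all short words
  have hfin : {l : List A | l.length ≤ k - 1}.Finite := List.finite_length_le A (k-1)
  set F : List A → ℕ := fun u => if h : u ≠ [] ∧ u.length ≤ k - 1
    then (hcon u h.1 h.2).choose else 0 with hF
  set ℓs : ℕ := hfin.toFinset.sup F + 1 with hℓs
  have hℓkey : ∀ u : List A, u ≠ [] → u.length ≤ k - 1 → ∀ n, ¬ powWord u ℓs <:+: v n := by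
    intro u h1 h2 n hinf
    have hFu : F u = (hcon u h1 h2).choose := dif_pos ⟨h1, h2⟩
    obtain ⟨hpos, hall⟩ := (hcon u h1 h2).choose_spec
    have hle : (hcon u h1 h2).choose ≤ hfin.toFinset.sup F := by
      rw [← hFu]
      exact Finset.le_sup (by rw [Set.Finite.mem_toFinset]; exact h2)
    exact hall n ((pw_prefix (show (hcon u h1 h2).choose ≤ ℓs by omega)).isInfix.trans hinf)
  -- bound on periodic prefixes
  have hPex : ∀ p, 0 < p → ∃ P, ∀ M, Per x 0 M p → M ≤ P := by
    intro p hp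
    by_contra hno
    push_neg at hno
    apply haper
    refine ⟨0, p, hp, ?_⟩
    intro n _
    obtain ⟨M, hPer, hM⟩ := hno (n + p)
    have := hPer n (by omega)
    simpa using this
  set Pf : ℕ → ℕ := fun p => if h : 0 < p then (hPex p h).choose else 0 with hPfdef
  have hPf : ∀ p, 0 < p → ∀ M, Per x 0 M p → M ≤ Pf p := by
    intro p h
    have : Pf p = (hPex p h).choose := dif_pos h
    rw [this]
    exact (hPex p h).choose_spec
  set a : ℕ → ℕ := fun n => (sesq v n).length with hadef
  set Λf : ℕ → ℕ := fun p => Pf p + a (Pf p) + (ℓs + 1) * p + p + 2 with hΛf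
  set Λ : ℕ := (Finset.Icc 1 (k-1)).sup Λf with hΛ
  -- apply the core lemma
  obtain ⟨s, p, hp, hpk, hPerΛ⟩ := core x hk havoid Λ
  have hΛp : Λf p ≤ Λ := Finset.le_sup (by rw [Finset.mem_Icc]; omega)
  have hPerp : Per x s (Λf p) p := Per_mono x hPerΛ hΛp
  -- structure facts
  have hxv : ∀ n, v n = Fac x (a n) ((v n).length) := fun n => xv x v hx n
  have hxq : ∀ n t, t < a n → x (a n + (v n).length + t) = x t := fun n t ht => xq x v hx n t ht
  have hasucc : ∀ n, a (n+1) = a n + ((v n).length + a n) := fun n => alen_succ v n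
  have halb : ∀ n, n + 1 ≤ a n := fun n => alen_lb v hv n
  have hamono : ∀ {m n : ℕ}, m ≤ n → a m ≤ a n := fun h => alen_mono v hv h
  have hv0 : v 0 = Fac x 0 (a 0) := by
    have := sesq_eq_Fac x v hx 0
    simpa [sesq, hadef] using this
  have hmul1 : ℓs * p ≤ (ℓs + 1) * p := Nat.mul_le_mul_right _ (by omega)
  -- powers of short words inside v n are impossible
  have hinV : ∀ n α len, a n ≤ α → α + len ≤ a n + (v n).length →
      Per x α len p → (ℓs + 1) * p ≤ len → False := by
    intro n α len h1 h2 hPer hlen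
    have hw : powWord (Fac x α p) ℓs = Fac x α (ℓs * p) := pow_eq x hPer ℓs hlen
    refine hℓkey (Fac x α p) ?_ ?_ n ?_
    · intro h
      have := congrArg List.length h
      simp at this
      omega
    · simp [hpk]
    · rw [hw, hxv n]
      exact Fac_infix x h1 (by omega)
  -- bound on periodic suffixes of the sesquipower prefixes
  have hS : ∀ n M, M ≤ a n → Per x (a n - M) M p → M ≤ a (Pf p) := by
    intro n
    induction n with
    | zero =>
      intro M h1 _
      exact le_trans h1 (hamono (Nat.zero_le _))
    | succ n IH =>
      intro M h1 h2
      by_cases hM : M ≤ a n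
      · -- transfer to suffix of previous level
        apply IH M hM
        intro r hr
        have t1 : (a n - M) + r + p < a n := by omega
        have t2 : (a n - M) + r < a n := by omega
        have e1 := hxq n _ t1
        have e2 := hxq n _ t2
        have p1 : a n + (v n).length + ((a n - M) + r + p) = (a (n+1) - M) + r + p := by
          rw [hasucc]; omega
        have p2 : a n + (v n).length + ((a n - M) + r) = (a (n+1) - M) + r := by
          rw [hasucc]; omega
        rw [p1] at e1
        rw [p2] at e2
        rw [← e1, ← e2]
        exact h2 r hr
      · -- M covers the whole previous level: periodic prefix
        push_neg at hM
        have hq : a (n+1) = a n + (v n).length + a n := by rw [hasucc]; omega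
        have hPerW : Per x (a n + (v n).length) (a n) p := by
          apply Per_restrict x h2 (by omega) (by omega)
        have hPer0 : Per x 0 (a n) p := by
          intro r hr
          have e1 := hxq n (r + p) (by omega)
          have e2 := hxq n r (by omega)
          have h3 := hPerW r hr
          have p1 : a n + (v n).length + (r + p) = a n + (v n).length + r + p := by omega
          rw [p1] at e1
          simp only [Nat.zero_add]
          rw [← e1, ← e2]
          exact h3
        have hanP : a n ≤ Pf p := hPf p hp _ hPer0
        have : n + 1 ≤ Pf p := le_trans (halb n) hanP
        have : a (n+1) ≤ a (Pf p) := hamono this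
        omega
  -- the descent
  have hdesc : ∀ n s', s' + Λf p ≤ a n → Per x s' (Λf p) p → False := by
    have hΛval : Λf p = Pf p + a (Pf p) + (ℓs + 1) * p + p + 2 := rfl
    intro n
    induction n with
    | zero =>
      intro s' h1 h2
      refine hℓkey (Fac x s' p) ?_ ?_ 0 ?_
      · intro h
        have := congrArg List.length h
        simp at this
        omega
      · simp [hpk]
      · have hw : powWord (Fac x s' p) ℓs = Fac x s' (ℓs * p) := pow_eq x h2 ℓs (by omega)
        rw [hw, hv0]
        exact Fac_infix x (by omega) (by omega)
    | succ n IH =>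
      intro s' h1 h2
      have hq : a (n+1) = a n + (v n).length + a n := by rw [hasucc]; omega
      by_cases c1 : s' + Λf p ≤ a n
      · exact IH s' c1 h2
      push_neg at c1
      by_cases c2 : a n + (v n).length ≤ s'
      · -- inside the second copy of W n
        apply IH (s' - (a n + (v n).length)) (by omega)
        intro r hr
        have t1 : (s' - (a n + (v n).length)) + r + p < a n := by omega
        have t2 : (s' - (a n + (v n).length)) + r < a n := by omega
        have e1 := hxq n _ t1
        have e2 := hxq n _ t2
        have p1 : a n + (v n).length + ((s' - (a n + (v n).length)) + r + p) = s' + r + p := by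
          omega
        have p2 : a n + (v n).length + ((s' - (a n + (v n).length)) + r) = s' + r := by omega
        rw [p1] at e1
        rw [p2] at e2
        rw [← e1, ← e2]
        exact h2 r hr
      push_neg at c2
      by_cases c3 : s' < a n
      · -- crosses the first junction
        have hM₁ : a n - s' ≤ a (Pf p) := by
          apply hS n (a n - s') (by omega)
          have e : a n - (a n - s') = s' := by omega
          rw [e]
          exact Per_mono x h2 (by omega)
        by_cases c4 : s' + Λf p ≤ a n + (v n).length
        · exact hinV n (a n) (s' + Λf p - a n) (le_refl _) (by omega)
            (Per_restrict x h2 (by omega) (by omega)) (by omega)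
        · push_neg at c4
          by_cases c5 : (ℓs + 1) * p ≤ (v n).length
          · exact hinV n (a n) ((v n).length) (le_refl _) (le_refl _)
              (Per_restrict x h2 (by omega) (by omega)) c5
          · push_neg at c5
            have hPer₃ : Per x (a n + (v n).length) (s' + Λf p - (a n + (v n).length)) p :=
              Per_restrict x h2 (by omega) (by omega)
            have hPer0 : Per x 0 (s' + Λf p - (a n + (v n).length)) p := by
              intro r hr
              have e1 := hxq n (r + p) (by omega)
              have e2 := hxq n r (by omega)
              have h3 := hPer₃ r hr
              have p1 : a n + (v n).length + (r + p) = a n + (v n).length + r + p := by omega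
              rw [p1] at e1
              simp only [Nat.zero_add]
              rw [← e1, ← e2]
              exact h3
            have := hPf p hp _ hPer0
            omega
      · -- starts inside v n
        push_neg at c3
        by_cases c4 : s' + Λf p ≤ a n + (v n).length
        · exact hinV n s' (Λf p) c3 c4 h2 (by omega)
        · push_neg at c4
          by_cases c5 : (ℓs + 1) * p ≤ a n + (v n).length - s'
          · exact hinV n s' (a n + (v n).length - s') c3 (by omega)
              (Per_mono x h2 (by omega)) c5
          · push_neg at c5
            have hPer₃ : Per x (a n + (v n).length) (s' + Λf p - (a n + (v n).length)) p :=
              Per_restrict x h2 (by omega) (by omega)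
            have hPer0 : Per x 0 (s' + Λf p - (a n + (v n).length)) p := by
              intro r hr
              have e1 := hxq n (r + p) (by omega)
              have e2 := hxq n r (by omega)
              have h3 := hPer₃ r hr
              have p1 : a n + (v n).length + (r + p) = a n + (v n).length + r + p := by omega
              rw [p1] at e1
              simp only [Nat.zero_add]
              rw [← e1, ← e2]
              exact h3
            have := hPf p hp _ hPer0
            omega
  exact hdesc (s + Λf p) s (by have := halb (s + Λf p); omega) hPerp
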